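/- arXiv:0803.1529 — 4 statements merged into one kernel-verified Lean document; each statement's English description precedes it below -/
import Mathlib

section
/- Let R be a ring and M a bounded chain complex of left R-modules. Suppose the identity chain map of M is chain homotopic to a chain map e : M → M such that for every degree n the component e_n : M_n → M_n factors through a finitely generated free R-module (i.e., e_n = β ∘ α for some natural number k and R-linear maps α : M_n → R^k and β : R^k → M_n). Then there exist a bounded chain complex T of finitely generated projective R-modules and chain maps f : M → T and g : T → M such that g ∘ f is chain homotopic to the identity of M. -/
open CategoryTheory

/-- A ℤ-indexed chain complex is bounded if all but finitely many terms are zero. -/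
def IsBoundedComplex {R : Type} [Ring R] (M : ChainComplex (ModuleCat.{0} R) ℤ) : Prop :=
  {n : ℤ | ¬ Subsingleton (M.X n)}.Finite

/-- Every term of the complex is a finitely generated projective `R`-module. -/
def IsFinProjComplex {R : Type} [Ring R] (T : ChainComplex (ModuleCat.{0} R) ℤ) : Prop :=
  ∀ n : ℤ, Module.Finite R (T.X n) ∧ Module.Projective R (T.X n)

/-- A linear map factors through a finitely generated free module `R^k`. -/
def FactorsThroughFinFree {R : Type} [Ring R] {X Y : Type} [AddCommGroup X] [Module R X]
    [AddCommGroup Y] [Module R Y] (e : X →ₗ[R] Y) : Prop :=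
  ∃ (k : ℕ) (α : X →ₗ[R] (Fin k → R)) (β : (Fin k → R) →ₗ[R] Y), e = β ∘ₗ α

/-- If the identity of a bounded complex `M` is chain homotopic to a chain map `e` whose
degreewise components factor through finitely generated free modules (an algebraically nuclear
endomorphism), then `M` is dominated up to homotopy by a bounded complex of finitely generated
projective modules. -/
theorem stmt1 (R : Type) [Ring R] (M : ChainComplex (ModuleCat.{0} R) ℤ)
    (hM : IsBoundedComplex M) (e : M ⟶ M)
    (he : ∀ n : ℤ, FactorsThroughFinFree ((e.f n).hom : M.X n →ₗ[R] M.X n))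
    (h : Homotopy (𝟙 M) e) :
    ∃ T : ChainComplex (ModuleCat.{0} R) ℤ, IsBoundedComplex T ∧ IsFinProjComplex T ∧
      ∃ (f : M ⟶ T) (g : T ⟶ M), Nonempty (Homotopy (f ≫ g) (𝟙 M)) := by
  classical
  have hch : ∀ n : ℤ, ∃ (kk : ℕ) (a : M.X n →ₗ[R] (Fin kk → R))
      (b : (Fin kk → R) →ₗ[R] M.X n),
      (∀ x, b (a x) = e.f n x) ∧ (Subsingleton (M.X n) → kk = 0) := by
    intro n
    by_cases hs : Subsingleton (M.X n)
    · exact ⟨0, 0, 0, fun x => Subsingleton.elim _ _, fun _ => rfl⟩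
    · obtain ⟨kk, aa, bb, hab⟩ := he n
      exact ⟨kk, aa, bb, fun x => (LinearMap.congr_fun hab x).symm, fun hs' => absurd hs' hs⟩
  choose k a b hba hk using hch
  -- elementwise facts
  have dd : ∀ (i j l : ℤ) (x : M.X i), M.d j l (M.d i j x) = 0 := by
    intro i j l x
    have := congr_arg (fun f : M.X i ⟶ M.X l => f x) (M.d_comp_d i j l)
    exact this
  have de : ∀ (i j : ℤ) (x : M.X i), M.d i j (e.f i x) = e.f j (M.d i j x) := by
    intro i j x
    have := congr_arg (fun f : M.X i ⟶ M.X j => f x) (e.comm i j)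
    exact this
  have h3 : ∀ (i : ℤ) (x : M.X i),
      x = h.hom (i-1) i (M.d i (i-1) x) + M.d (i+1) i (h.hom i (i+1) x) + e.f i x := by
    intro i x
    have hc := h.comm i
    rw [dNext_eq h.hom (show (ComplexShape.down ℤ).Rel i (i-1) by simp),
        prevD_eq h.hom (show (ComplexShape.down ℤ).Rel (i+1) i by simp)] at hc
    have := congr_arg (fun f : M.X i ⟶ M.X i => f x) hc
    simpa using this
  have key : ∀ (j : ℤ) (z : M.X j), M.d j (j-1) z = 0 →
      z - M.d (j+1) j (h.hom j (j+1) z) = e.f j z := by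
    intro j z hz
    have h3j := h3 j z
    rw [hz, map_zero, zero_add] at h3j
    rw [add_comm] at h3j
    exact sub_eq_of_eq_add h3j
  refine ⟨
    { X := fun n => ModuleCat.of R (Fin (k n) → R)
      d := fun i j => ModuleCat.ofHom ((a j) ∘ₗ ((M.d i j).hom ∘ₗ (b i)))
      shape := fun i j hij => by
        have h0 : M.d i j = 0 := M.shape i j hij
        refine ModuleCat.hom_ext (LinearMap.ext fun x => ?_)
        show a j (M.d i j (b i x)) = 0
        rw [h0]
        exact map_zero (a j)
      d_comp_d' := fun i j l _ _ => by
        refine ModuleCat.hom_ext (LinearMap.ext fun x => ?_)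
        show a l (M.d j l (b j (a j (M.d i j (b i x))))) = 0
        rw [hba j, de, dd, map_zero, map_zero] }, ?_, ?_, ?_⟩
  · refine hM.subset fun n hn hs => hn ?_
    have h0 := hk n hs
    show Subsingleton (Fin (k n) → R)
    rw [h0]
    exact ⟨fun f g => funext fun i => i.elim0⟩
  · intro n
    exact ⟨(inferInstance : Module.Finite R (Fin (k n) → R)),
      (inferInstance : Module.Projective R (Fin (k n) → R))⟩
  · refine ⟨{ f := fun n => ModuleCat.ofHom ((a n) ∘ₗ (LinearMap.id -
        ((M.d (n+1) n).hom ∘ₗ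
          (h.hom n (n+1)).hom))), comm' := ?_ },
      { f := fun n => ModuleCat.ofHom ((LinearMap.id -
          ((h.hom (n-1) n).hom ∘ₗ
            (M.d n (n-1)).hom)) ∘ₗ (b n)), comm' := ?_ }, ⟨?_⟩⟩
    -- f is a chain map
    · intro i j hij
      have hij' : j + 1 = i := hij
      subst hij'
      refine ModuleCat.hom_ext (LinearMap.ext fun x => ?_)
      show a j (M.d (j+1) j (b (j+1) (a (j+1) (x - M.d (j+1+1) (j+1) (h.hom (j+1) (j+1+1) x)))))
        = a j ((M.d (j+1) j x) - M.d (j+1) j (h.hom j (j+1) (M.d (j+1) j x)))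
      rw [hba (j+1), de, map_sub (ConcreteCategory.hom (M.d (j+1) j)), dd (j+1+1) (j+1) j, sub_zero,
        key j (M.d (j+1) j x) (dd (j+1) j (j-1) x)]
    -- g is a chain map
    · intro i j hij
      have hij' : j + 1 = i := hij
      subst hij'
      refine ModuleCat.hom_ext (LinearMap.ext fun x => ?_)
      show M.d (j+1) j (b (j+1) x - h.hom (j+1-1) (j+1) (M.d (j+1) (j+1-1) (b (j+1) x)))
        = b j (a j (M.d (j+1) j (b (j+1) x)))
          - h.hom (j-1) j (M.d j (j-1) (b j (a j (M.d (j+1) j (b (j+1) x)))))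
      rw [show (j+1-1 : ℤ) = j from by omega]
      rw [hba j, de, dd, map_zero, map_zero, sub_zero, map_sub,
        key j (M.d (j+1) j (b (j+1) x)) (dd (j+1) j (j-1) (b (j+1) x))]
    -- the homotopy
    · refine
        { hom := fun i j => ModuleCat.ofHom (-((h.hom i j).hom
            + (h.hom i j).hom ∘ₗ (e.f i).hom
            + ((h.hom i j).hom ∘ₗ (h.hom (i-1) i).hom)
                ∘ₗ (M.d i (i-1)).hom))
          zero := fun i j hij => by
            have hz : h.hom i j = 0 := h.zero i j hij
            show ModuleCat.ofHom (-((h.hom i j).hom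
              + (h.hom i j).hom ∘ₗ (e.f i).hom
              + ((h.hom i j).hom ∘ₗ (h.hom (i-1) i).hom)
                  ∘ₗ (M.d i (i-1)).hom)) = 0
            rw [hz]
            simp
          comm := fun i => by
            rw [dNext_eq _ (show (ComplexShape.down ℤ).Rel i (i-1) by simp),
                prevD_eq _ (show (ComplexShape.down ℤ).Rel (i+1) i by simp)]
            refine ModuleCat.hom_ext (LinearMap.ext fun x => ?_)
            show b i (a i (x - M.d (i+1) i (h.hom i (i+1) x)))
                - h.hom (i-1) i (M.d i (i-1) (b i (a i (x - M.d (i+1) i (h.hom i (i+1) x)))))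
              = -(h.hom (i-1) i (M.d i (i-1) x)
                  + h.hom (i-1) i (e.f (i-1) (M.d i (i-1) x))
                  + h.hom (i-1) i (h.hom (i-1-1) (i-1) (M.d (i-1) (i-1-1) (M.d i (i-1) x))))
                + M.d (i+1) i (-(h.hom i (i+1) x
                  + h.hom i (i+1) (e.f i x)
                  + h.hom i (i+1) (h.hom (i-1) i (M.d i (i-1) x))))
                + x
            have u1 : e.f i x = x - h.hom (i-1) i (M.d i (i-1) x)
                - M.d (i+1) i (h.hom i (i+1) x) := by
              rw [sub_sub, eq_sub_iff_add_eq, add_comm]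
              exact (h3 i x).symm
            have u2 : e.f i (M.d (i+1) i (h.hom i (i+1) x))
                = M.d (i+1) i (h.hom i (i+1) x)
                  - M.d (i+1) i (h.hom i (i+1) (M.d (i+1) i (h.hom i (i+1) x))) := by
              have h3y := h3 i (M.d (i+1) i (h.hom i (i+1) x))
              rw [dd, map_zero, zero_add] at h3y
              rw [eq_sub_iff_add_eq, add_comm]
              exact h3y.symm
            simp only [hba, de, map_sub, dd, map_zero, sub_zero, zero_add, add_zero,
              neg_zero, map_add, map_neg]
            rw [u2, u1]
            simp only [map_sub]
            abel }
end

section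
/- Let R be a ring, I a two-sided ideal of R, and M a bounded chain complex of left R-modules. Let M·I denote the subcomplex whose degree-n term is the submodule I•M_n generated by {a • m : a ∈ I, m ∈ M_n} (this is a subcomplex since the differentials are R-linear). Then the inclusion chain map M·I → M is a homotopy equivalence of chain complexes if and only if the identity of M is chain homotopic to a chain map f : M → M satisfying f_n(M_n) ⊆ I•M_n for every degree n. -/
open CategoryTheory

lemma smul_top_le {R : Type} [Ring R] {X Y : Type} [AddCommGroup X] [Module R X]
    [AddCommGroup Y] [Module R Y] (I : Ideal R) (f : X →ₗ[R] Y) :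
    ∀ x ∈ I • (⊤ : Submodule R X), f x ∈ I • (⊤ : Submodule R Y) := by
  intro x hx
  have h1 : f x ∈ (I • (⊤ : Submodule R X)).map f := Submodule.mem_map_of_mem hx
  rw [Submodule.map_smul''] at h1
  have h2 : I • (⊤ : Submodule R X).map f ≤ I • (⊤ : Submodule R Y) :=
    smul_mono_right I le_top
  exact h2 h1

/-- The subcomplex `M·I` of a chain complex `M` of left `R`-modules, whose degree-`n` term is
the submodule `I • M_n` generated by `{a • m : a ∈ I, m ∈ M_n}`. -/
def smulSubcomplex {R : Type} [Ring R] (I : Ideal R)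
    (M : ChainComplex (ModuleCat.{0} R) ℤ) : ChainComplex (ModuleCat.{0} R) ℤ where
  X n := ModuleCat.of R (I • (⊤ : Submodule R (M.X n)) : Submodule R (M.X n))
  d i j := ModuleCat.ofHom (LinearMap.restrict (M.d i j).hom (smul_top_le I (M.d i j).hom))
  shape i j h := by
    apply ModuleCat.hom_ext; apply LinearMap.ext; intro x
    apply Subtype.ext
    exact DFunLike.congr_fun (congrArg ModuleCat.Hom.hom (M.shape i j h)) x.1
  d_comp_d' i j k _ _ := by
    apply ModuleCat.hom_ext; apply LinearMap.ext; intro x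
    apply Subtype.ext
    exact DFunLike.congr_fun (congrArg ModuleCat.Hom.hom (M.d_comp_d i j k)) x.1

/-- The inclusion chain map `M·I ⟶ M`. -/
def smulSubcomplexIncl {R : Type} [Ring R] (I : Ideal R)
    (M : ChainComplex (ModuleCat.{0} R) ℤ) : smulSubcomplex I M ⟶ M where
  f n := ModuleCat.ofHom (I • (⊤ : Submodule R (M.X n))).subtype
  comm' i j _ := by
    apply ModuleCat.hom_ext; apply LinearMap.ext; intro x
    rfl


/-- Factor a chain map with image in `I • M_n` through the subcomplex. -/
def restrictToSub {R : Type} [Ring R] (I : Ideal R)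
    (M : ChainComplex (ModuleCat.{0} R) ℤ) (f : M ⟶ M)
    (hf : ∀ (n : ℤ) (m : M.X n), (f.f n) m ∈ I • (⊤ : Submodule R (M.X n))) :
    M ⟶ smulSubcomplex I M where
  f n := ModuleCat.ofHom (LinearMap.codRestrict _ (f.f n).hom (hf n))
  comm' i j _ := by
    apply ModuleCat.hom_ext; apply LinearMap.ext; intro x
    apply Subtype.ext
    exact DFunLike.congr_fun (congrArg ModuleCat.Hom.hom (f.comm i j)) x

/-- For a two-sided ideal `I` of `R` and a bounded chain complex `M` of left `R`-modules, the
inclusion `M·I ⟶ M` is a homotopy equivalence if and only if the identity of `M` is chain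
homotopic to a chain map `f : M ⟶ M` with `f_n(M_n) ⊆ I • M_n` in every degree. -/
theorem stmt3 (R : Type) [Ring R] (I : Ideal R) (hI : ∀ a ∈ I, ∀ r : R, a * r ∈ I)
    (M : ChainComplex (ModuleCat.{0} R) ℤ) (hM : IsBoundedComplex M) :
    (∃ e : HomotopyEquiv (smulSubcomplex I M) M, e.hom = smulSubcomplexIncl I M) ↔
    (∃ f : M ⟶ M, (∀ (n : ℤ) (m : M.X n), (f.f n) m ∈ I • (⊤ : Submodule R (M.X n))) ∧
      Nonempty (Homotopy (𝟙 M) f)) := by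
  constructor
  · rintro ⟨e, he⟩
    refine ⟨e.inv ≫ e.hom, ?_, ⟨e.homotopyInvHomId.symm⟩⟩
    intro n m
    rw [he]
    exact (show ↥(I • (⊤ : Submodule R (M.X n))) from (e.inv.f n) m).2
  · rintro ⟨f, hf, ⟨H⟩⟩
    have hge : restrictToSub I M f hf ≫ smulSubcomplexIncl I M = f := by
      ext n x
      rfl
    have Hsub : Homotopy (𝟙 (smulSubcomplex I M))
        (smulSubcomplexIncl I M ≫ restrictToSub I M f hf) :=
      { hom := fun i j => ModuleCat.ofHom
          (LinearMap.restrict (H.hom i j).hom (smul_top_le I (H.hom i j).hom))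
        zero := fun i j h => by
          apply ModuleCat.hom_ext; apply LinearMap.ext; intro x
          apply Subtype.ext
          exact DFunLike.congr_fun (congrArg ModuleCat.Hom.hom (H.zero i j h)) x.1
        comm := fun i => by
          apply ModuleCat.hom_ext; apply LinearMap.ext; intro x
          apply Subtype.ext
          have := DFunLike.congr_fun (congrArg ModuleCat.Hom.hom (H.comm i)) x.1
          simp only [dNext, prevD, smulSubcomplex, smulSubcomplexIncl, restrictToSub,
            HomologicalComplex.id_f, HomologicalComplex.comp_f,
            LinearMap.add_apply, LinearMap.comp_apply, LinearMap.restrict_apply,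
            LinearMap.codRestrict_apply, Submodule.coe_add, Submodule.coe_subtype,
            ModuleCat.id_apply, AddMonoidHom.coe_mk, ZeroHom.coe_mk, ModuleCat.hom_comp,
            ModuleCat.hom_add, ModuleCat.hom_ofHom, ModuleCat.hom_id, LinearMap.id_apply] at this ⊢
          exact this }
    exact ⟨⟨smulSubcomplexIncl I M, restrictToSub I M f hf, Hsub.symm,
      (hge ▸ H.symm : Homotopy f (𝟙 M))⟩, rfl⟩
end

section
/- Let A be an associative algebra over ℂ carrying a topology making it a topological ring with continuous scalar multiplication. Suppose there is an increasing sequence (A_n) of subalgebras of A, each equipped with a topology τ_n making it a completely metrizable topological ℂ-algebra (addition, multiplication and scalar multiplication continuous) such that the inclusion (A_n, τ_n) → A is continuous, and suppose each (A_n, τ_n) is admissible: there exists a neighborhood U_n of 0 in τ_n such that for every compact subset K of U_n the multiplicative closure ⋃_{m ≥ 1} K^m is totally bounded for τ_n. Assume moreover that every totally bounded subset of A is contained in some A_n and is totally bounded for the topology τ_n. Then A is multiplicatively convex for the precompact bornology: for every totally bounded subset S of A there exists a real number t > 0 such that the multiplicative closure ⋃_{m ≥ 1} (t⁻¹ • S)^m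 is totally bounded in A. -/
open scoped Pointwise

/-- A subset `s` of an additive group with a (given) topology `τ` is totally bounded if for
every neighborhood `V` of `0` finitely many translates of `V` cover `s`. -/
def TotBddAdd {A : Type} [AddCommGroup A] (τ : TopologicalSpace A) (s : Set A) : Prop :=
  ∀ V ∈ @nhds A τ 0, ∃ F : Finset A, s ⊆ ⋃ x ∈ F, (fun v => x + v) '' V

/-- The multiplicative closure `⋃_{m ≥ 1} s^m` of a subset of a monoid. -/
def mulClosure {A : Type} [Monoid A] (s : Set A) : Set A :=
  ⋃ m : ℕ, ⋃ (_ : 1 ≤ m), s ^ m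
open Filter Set UniformSpace Topology
open scoped Uniformity

theorem klee_aux (Y : Type) [AddCommGroup Y] [P : PseudoMetricSpace Y] [IsUniformAddGroup Y]
    (hm : ∃ m : MetricSpace Y,
      m.toUniformSpace.toTopologicalSpace = P.toUniformSpace.toTopologicalSpace ∧
      @CompleteSpace Y m.toUniformSpace) :
    CompleteSpace Y := by
  obtain ⟨m, hmt, hmc⟩ := hm
  haveI hT2 : T2Space Y := by
    rw [← hmt]
    letI := m
    exact inferInstance
  have hue : IsUniformEmbedding ((↑) : Y → Completion Y) :=
    Completion.isUniformEmbedding_coe Y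
  have hdr : DenseRange ((↑) : Y → Completion Y) := Completion.denseRange_coe
  -- the auxiliary complete metric on `Y`, as a bare real-valued function
  set dY : Y → Y → ℝ := fun a b => @dist Y m.toPseudoMetricSpace.toDist a b with hdY
  have dYtri : ∀ a b c, dY a c ≤ dY a b + dY b c := fun a b c =>
    @dist_triangle Y m.toPseudoMetricSpace a b c
  have dYsymm : ∀ a b, dY a b = dY b a := fun a b =>
    @dist_comm Y m.toPseudoMetricSpace a b
  have dYself : ∀ a, dY a a = 0 := fun a =>
    @dist_self Y m.toPseudoMetricSpace a
  -- the open sets witnessing that `range coe` is Gδ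
  set u : ℕ → Set (Completion Y) := fun n =>
    {x | ∃ V : Set (Completion Y), IsOpen V ∧ x ∈ V ∧
      ∀ a ∈ ((↑) : Y → Completion Y) ⁻¹' V, ∀ b ∈ ((↑) : Y → Completion Y) ⁻¹' V,
        dY a b ≤ ((n : ℝ) + 1)⁻¹} with hu
  have hopen : ∀ n, IsOpen (u n) := by
    intro n
    rw [isOpen_iff_forall_mem_open]
    rintro x ⟨V, hVo, hxV, hVs⟩
    exact ⟨V, fun y hy => ⟨V, hVo, hy, hVs⟩, hVo, hxV⟩
  have hrange_sub : ∀ n, Set.range ((↑) : Y → Completion Y) ⊆ u n := by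
    rintro n _ ⟨y, rfl⟩
    have hrpos : (0 : ℝ) < ((n : ℝ) + 1)⁻¹ / 2 := by positivity
    have hball_open : IsOpen {z : Y | dY z y < ((n : ℝ) + 1)⁻¹ / 2} := by
      rw [← hmt]
      exact @Metric.isOpen_ball Y m.toPseudoMetricSpace y _
    obtain ⟨V, hVo, hVeq⟩ := (hue.isUniformInducing.isInducing.isOpen_iff).mp hball_open
    refine ⟨V, hVo, ?_, ?_⟩
    · show (y : Completion Y) ∈ V
      have : y ∈ ((↑) : Y → Completion Y) ⁻¹' V := by
        rw [hVeq]
        simpa [dYself] using hrpos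
      exact this
    · intro a ha b hb
      rw [hVeq] at ha hb
      have ha' : dY a y < ((n : ℝ) + 1)⁻¹ / 2 := ha
      have hb' : dY b y < ((n : ℝ) + 1)⁻¹ / 2 := hb
      have := dYtri a y b
      rw [dYsymm y b] at this
      linarith
  have hG : Set.range ((↑) : Y → Completion Y) = ⋂ n, u n := by
    apply Set.Subset.antisymm
    · exact Set.subset_iInter fun n => hrange_sub n
    · intro x hx
      simp only [Set.mem_iInter] at hx
      choose V hVo hxV hVs using hx
      set W : ℕ → Set (Completion Y) := fun n =>
        (⋂ k ∈ Finset.range (n + 1), V k) ∩ Metric.ball x (((n : ℝ) + 1)⁻¹) with hW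
      have hWo : ∀ n, IsOpen (W n) := fun n =>
        (isOpen_biInter_finset fun k _ => hVo k).inter Metric.isOpen_ball
      have hxW : ∀ n, x ∈ W n :=
        fun n => ⟨Set.mem_iInter₂.mpr fun k _ => hxV k, Metric.mem_ball_self (by positivity)⟩
      have hWne : ∀ n, ∃ y : Y, (y : Completion Y) ∈ W n := by
        intro n
        exact hdr.exists_mem_open (hWo n) ⟨x, hxW n⟩
      choose y hy using hWne
      have hyV : ∀ n k, k ≤ n → (y n : Completion Y) ∈ V k := fun n k hk =>
        Set.mem_iInter₂.mp (hy n).1 k (Finset.mem_range.mpr (Nat.lt_succ_of_le hk))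
      have hsmall : ∀ n i j, n ≤ i → n ≤ j → dY (y i) (y j) ≤ ((n : ℝ) + 1)⁻¹ := by
        intro n i j hi hj
        exact hVs n (y i) (hyV i n hi) (y j) (hyV j n hj)
      have hcauchy : @CauchySeq Y ℕ m.toUniformSpace _ y := by
        rw [@Metric.cauchySeq_iff Y ℕ m.toPseudoMetricSpace _ _ y]
        intro ε hε
        obtain ⟨N, hN⟩ := exists_nat_gt ε⁻¹
        have hNpos : (0:ℝ) < (N : ℝ) + 1 := by positivity
        have h1 : ((N : ℝ) + 1)⁻¹ < ε := by
          rw [inv_lt_comm₀ hNpos hε]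
          have : (0:ℝ) ≤ ε⁻¹ := by positivity
          linarith
        exact ⟨N, fun i hi j hj => lt_of_le_of_lt (hsmall N i j hi hj) h1⟩
      have hconv : ∃ l : Y, Filter.Tendsto y Filter.atTop
          (@nhds Y m.toUniformSpace.toTopologicalSpace l) :=
        @cauchySeq_tendsto_of_complete Y ℕ m.toUniformSpace _ hmc y hcauchy
      obtain ⟨l, hl⟩ := hconv
      rw [hmt] at hl
      have h1 : Filter.Tendsto (fun n => (y n : Completion Y)) Filter.atTop
          (nhds (l : Completion Y)) :=
        ((Completion.continuous_coe Y).tendsto l).comp hl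
      have h2 : Filter.Tendsto (fun n => (y n : Completion Y)) Filter.atTop (nhds x) := by
        rw [tendsto_iff_dist_tendsto_zero]
        have hb : ∀ n : ℕ, dist ((y n : Completion Y)) x ≤ ((n : ℝ) + 1)⁻¹ := fun n =>
          le_of_lt (by have := (hy n).2; rwa [Metric.mem_ball] at this)
        refine squeeze_zero (fun n => dist_nonneg) hb ?_
        simpa [one_div] using tendsto_one_div_add_atTop_nhds_zero_nat (𝕜 := ℝ)
      exact ⟨l, tendsto_nhds_unique h1 h2⟩
  -- the Baire category argument
  have hGδ : IsGδ (Set.range ((↑) : Y → Completion Y)) := by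
    rw [hG]; exact IsGδ.iInter_of_isOpen hopen
  have key : Function.Surjective ((↑) : Y → Completion Y) := by
    intro x
    have hcont : Continuous (fun z : Completion Y => z - x) :=
      continuous_id.sub continuous_const
    have hT_Gδ : IsGδ ((fun z => z - x) ⁻¹' Set.range ((↑) : Y → Completion Y)) := by
      rw [hG, Set.preimage_iInter]
      exact IsGδ.iInter_of_isOpen fun n => (hopen n).preimage hcont
    have hTeq : (fun z => z - x) ⁻¹' Set.range ((↑) : Y → Completion Y) =
        Set.range (fun y : Y => (y : Completion Y) + x) := by
      ext z
      constructor
      · rintro ⟨w, hw⟩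
        refine ⟨w, ?_⟩
        show (w : Completion Y) + x = z
        have hw' : (w : Completion Y) = z - x := hw
        rw [hw', sub_add_cancel]
      · rintro ⟨w, rfl⟩
        refine ⟨w, ?_⟩
        show (w : Completion Y) = ((w : Completion Y) + x) - x
        rw [add_sub_cancel_right]
    have hT_dense : Dense ((fun z => z - x) ⁻¹' Set.range ((↑) : Y → Completion Y)) := by
      rw [hTeq]
      have hsur : DenseRange (fun z : Completion Y => z + x) :=
        (Homeomorph.addRight x).surjective.denseRange
      exact hsur.comp hdr (Homeomorph.addRight x).continuous
    obtain ⟨z, hz1, hz2⟩ := (Dense.inter_of_Gδ hGδ hT_Gδ hdr hT_dense).nonempty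
    obtain ⟨a, ha⟩ := hz1
    obtain ⟨b, hb⟩ := hz2
    refine ⟨a - b, ?_⟩
    rw [Completion.coe_sub, ha, hb]
    show z - (z - x) = x
    exact sub_sub_cancel z x
  rw [completeSpace_iff_isComplete_univ]
  have hc : IsComplete (Set.range ((↑) : Y → Completion Y)) := by
    rw [Set.range_eq_univ.mpr key]
    exact completeSpace_iff_isComplete_univ.mp inferInstance
  rw [← Set.image_univ] at hc
  exact (isComplete_image_iff hue.isUniformInducing).mp hc

/-- Klee's theorem: a completely metrizable topological abelian group is complete
in its group uniformity. -/
theorem klee_complete (Y : Type) [AddCommGroup Y] [ts : TopologicalSpace Y]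
    [IsTopologicalAddGroup Y]
    (hm : ∃ m : MetricSpace Y, m.toUniformSpace.toTopologicalSpace = ts ∧
      @CompleteSpace Y m.toUniformSpace) :
    @CompleteSpace Y (IsTopologicalAddGroup.rightUniformSpace Y) := by
  obtain ⟨m, hmt, hmc⟩ := hm
  haveI : FirstCountableTopology Y := by
    rw [← hmt]; letI := m; exact inferInstance
  letI U : UniformSpace Y := IsTopologicalAddGroup.rightUniformSpace Y
  haveI hUAG : @IsUniformAddGroup Y U _ := isUniformAddGroup_of_addCommGroup
  haveI : (𝓤 Y).IsCountablyGenerated := IsUniformAddGroup.uniformity_countably_generated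
  obtain ⟨P, hP⟩ := UniformSpace.metrizable_uniformity Y
  have hP' : P.toUniformSpace = IsTopologicalAddGroup.rightUniformSpace Y := hP
  rw [← hP']
  haveI hUAG' : @IsUniformAddGroup Y P.toUniformSpace _ := by rw [hP']; exact hUAG
  refine @klee_aux Y _ P hUAG' ⟨m, ?_, hmc⟩
  rw [hP']
  exact hmt

theorem TotBddAdd.subset {A : Type} [AddCommGroup A] {τ : TopologicalSpace A} {s t : Set A}
    (hsub : s ⊆ t) (h : TotBddAdd τ t) : TotBddAdd τ s := fun V hV =>
  (h V hV).imp fun _F hF => hsub.trans hF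

theorem totBddAdd'_iff {Y : Type} [AddCommGroup Y] [U : UniformSpace Y] [IsUniformAddGroup Y]
    {s : Set Y} : TotBddAdd U.toTopologicalSpace s ↔ TotallyBounded s := by
  rw [totallyBounded_iff_subset_finite_iUnion_nhds_zero]
  have himg : ∀ (x : Y) (V : Set Y), (fun v => x + v) '' V = x +ᵥ V := fun x V => rfl
  constructor
  · intro h V hV
    obtain ⟨F, hF⟩ := h V hV
    refine ⟨(F : Set Y), F.finite_toSet, hF.trans ?_⟩
    apply Set.iUnion₂_subset
    intro x hx
    rw [himg]
    exact Set.subset_iUnion₂ (s := fun y (_ : y ∈ (F : Set Y)) => y +ᵥ V) x (by simpa using hx)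
  · intro h V hV
    obtain ⟨t, htf, hts⟩ := h V hV
    refine ⟨htf.toFinset, hts.trans ?_⟩
    apply Set.iUnion₂_subset
    intro x hx
    rw [← himg]
    exact Set.subset_iUnion₂ (s := fun y (_ : y ∈ htf.toFinset) => (fun v => y + v) '' V) x
      (by simpa using hx)

theorem TotBddAdd.image_addHom {Y A : Type} [AddCommGroup Y] [AddCommGroup A]
    {τY : TopologicalSpace Y} {τA : TopologicalSpace A} (f : Y →+ A)
    (hf : @Continuous Y A τY τA f) {s : Set Y} (h : TotBddAdd τY s) :
    TotBddAdd τA (f '' s) := by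
  classical
  intro V hV
  have h0 : Filter.Tendsto f (@nhds Y τY 0) (@nhds A τA 0) := by
    have := @Continuous.tendsto Y A τY τA f hf 0
    rwa [map_zero] at this
  obtain ⟨F, hF⟩ := h (f ⁻¹' V) (h0 hV)
  refine ⟨F.image f, ?_⟩
  rintro a ⟨y, hy, rfl⟩
  have := hF hy
  simp only [Set.mem_iUnion, Set.mem_image, Set.mem_preimage] at this
  obtain ⟨x, hxF, v, hv, rfl⟩ := this
  simp only [Set.mem_iUnion, Set.mem_image]
  exact ⟨f x, Finset.mem_image_of_mem f hxF, f v, hv, (map_add f x v).symm⟩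

theorem mulClosure_mono {A : Type} [Monoid A] {s t : Set A} (h : s ⊆ t) :
    mulClosure s ⊆ mulClosure t := by
  intro a ha
  simp only [mulClosure, Set.mem_iUnion] at ha ⊢
  obtain ⟨m, hm, hma⟩ := ha
  exact ⟨m, hm, Set.pow_subset_pow_left h hma⟩

theorem mulClosure_image {F : Type*} {A B : Type} [Monoid A] [Monoid B] [FunLike F A B]
    [MonoidHomClass F A B] (f : F) (s : Set A) :
    f '' mulClosure s = mulClosure (f '' s) := by
  simp only [mulClosure, Set.image_iUnion]
  exact Set.iUnion_congr fun m => Set.iUnion_congr fun _ => Set.image_pow f s m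

theorem aux_compactScale (Y : Type) [Ring Y] [Algebra ℂ Y] [ts : TopologicalSpace Y]
    [IsTopologicalRing Y] [ContinuousSMul ℂ Y]
    (hmetr : ∃ m : MetricSpace Y, m.toUniformSpace.toTopologicalSpace = ts ∧
      @CompleteSpace Y m.toUniformSpace)
    (hadm : ∃ U ∈ nhds (0 : Y), ∀ K : Set Y, K ⊆ U → IsCompact K → TotBddAdd ts (mulClosure K))
    (T : Set Y) (hT : TotBddAdd ts T) :
    ∃ t : ℝ, 0 < t ∧ TotBddAdd ts (mulClosure (((t : ℂ))⁻¹ • T)) := by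
  obtain ⟨U₀, hU₀, hUK⟩ := hadm
  obtain ⟨V, ⟨hVn, hVc⟩, hVU⟩ := (closed_nhds_basis (0 : Y)).mem_iff.mp hU₀
  have hccs : ContinuousConstSMul ℂ Y := inferInstance
  letI U : UniformSpace Y := IsTopologicalAddGroup.rightUniformSpace Y
  haveI hUAG : IsUniformAddGroup Y := isUniformAddGroup_of_addCommGroup
  haveI : CompleteSpace Y := klee_complete Y hmetr
  haveI hsm : @ContinuousSMul ℂ Y _ _ U.toTopologicalSpace := ‹ContinuousSMul ℂ Y›
  haveI : @ContinuousConstSMul ℂ Y U.toTopologicalSpace _ := hccs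
  haveI : UniformContinuousConstSMul ℂ Y := uniformContinuousConstSMul_of_continuousConstSMul ℂ Y
  have hTB : TotallyBounded T := totBddAdd'_iff.mp hT
  have hvb : Bornology.IsVonNBounded ℂ T := hTB.isVonNBounded ℂ
  obtain ⟨r, hr⟩ := absorbs_iff_norm.mp (hvb hVn)
  set t : ℝ := max r 1 with ht_def
  have ht : (0 : ℝ) < t := lt_of_lt_of_le one_pos (le_max_right r 1)
  have hc0 : ((t : ℂ)) ≠ 0 := by
    simpa using ht.ne'
  have hsub : T ⊆ (t : ℂ) • V := by
    apply hr
    rw [Complex.norm_real, Real.norm_eq_abs, abs_of_pos ht]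
    exact le_max_left r 1
  have hscaled : ((t : ℂ))⁻¹ • T ⊆ V := by
    intro z hz
    obtain ⟨w, hw, rfl⟩ := hz
    obtain ⟨v, hv, rfl⟩ := hsub hw
    show ((t : ℂ))⁻¹ • ((t : ℂ) • v) ∈ V
    rwa [smul_smul, inv_mul_cancel₀ hc0, one_smul]
  have hTB2 : TotallyBounded (((t : ℂ))⁻¹ • T) := by
    have := hTB.image (uniformContinuous_const_smul (((t : ℂ))⁻¹))
    rwa [Set.image_smul] at this
  have hKc : IsCompact (closure (((t : ℂ))⁻¹ • T)) :=
    hTB2.closure.isCompact_of_isClosed isClosed_closure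
  have hKU : closure (((t : ℂ))⁻¹ • T) ⊆ U₀ := (closure_minimal hscaled hVc).trans hVU
  exact ⟨t, ht, TotBddAdd.subset (mulClosure_mono subset_closure) (hUK _ hKU hKc)⟩


/-- An LF-algebra which is an increasing union of admissible Fréchet algebras is
multiplicatively convex for the precompact bornology: every totally bounded subset has, after
rescaling by some `t > 0`, totally bounded multiplicative closure. -/
theorem stmt10 (A : Type) [Ring A] [Algebra ℂ A] [TopologicalSpace A] [IsTopologicalRing A]
    [ContinuousSMul ℂ A]
    (S : ℕ → Subalgebra ℂ A) (hmono : Monotone S)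
    (τ : ∀ n, TopologicalSpace (S n))
    (hring : ∀ n, @IsTopologicalRing (S n) (τ n) _)
    (hsmul : ∀ n, @ContinuousSMul ℂ (S n) _ _ (τ n))
    (hmetr : ∀ n, ∃ m : MetricSpace (S n),
      m.toUniformSpace.toTopologicalSpace = τ n ∧ @CompleteSpace (S n) m.toUniformSpace)
    (hincl : ∀ n, @Continuous (S n) A (τ n) _ Subtype.val)
    (hadm : ∀ n, ∃ U ∈ @nhds (S n) (τ n) 0,
      ∀ K : Set (S n), K ⊆ U → @IsCompact (S n) (τ n) K → TotBddAdd (τ n) (mulClosure K))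
    (hLF : ∀ T : Set A, TotBddAdd (inferInstance : TopologicalSpace A) T →
      ∃ n, T ⊆ (S n : Set A) ∧ TotBddAdd (τ n) (Subtype.val ⁻¹' T)) :
    ∀ T : Set A, TotBddAdd (inferInstance : TopologicalSpace A) T →
      ∃ t : ℝ, 0 < t ∧
        TotBddAdd (inferInstance : TopologicalSpace A)
          (mulClosure (((t : ℂ))⁻¹ • T)) := by
  intro T hT
  obtain ⟨n, hTn, hT'⟩ := hLF T hT
  obtain ⟨t, ht, htb⟩ :=
    @aux_compactScale (↥(S n)) _ _ (τ n) (hring n) (hsmul n) (hmetr n) (hadm n)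
      (Subtype.val ⁻¹' T) hT'
  refine ⟨t, ht, ?_⟩
  set c : ℂ := ((t : ℂ))⁻¹ with hc
  let f : ↥(S n) →+ A := AddMonoidHom.mk' Subtype.val (fun a b => rfl)
  have himg := TotBddAdd.image_addHom (τY := τ n) (τA := inferInstance) f (hincl n) htb
  have hval_smul : ∀ x : ↥(S n), ((c • x : ↥(S n)) : A) = c • (x : A) := fun x => rfl
  have h2 : (Subtype.val : ↥(S n) → A) '' (c • (Subtype.val ⁻¹' T)) = c • T := by
    rw [Set.image_smul_comm _ _ _ hval_smul]
    congr 1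
    apply Set.image_preimage_eq_of_subset
    rw [Subtype.range_coe]
    exact hTn
  have h1 : (Subtype.val : ↥(S n) → A) '' mulClosure (c • (Subtype.val ⁻¹' T))
      = mulClosure (c • T) := by
    have h3 := mulClosure_image (S n).val (c • ((Subtype.val : ↥(S n) → A) ⁻¹' T))
    rw [Subalgebra.coe_val] at h3
    rw [h3, h2]
  rw [← h1]
  exact himg
end

section
/- Let R be a ring and M a bounded chain complex of left R-modules with differentials d_n : M_n → M_{n−1}. Suppose given R-linear maps ε_n, F_n : M_n → M_n and h_n : M_n → M_{n+1} for all n such that: (i) id_{M_n} − ε_n − F_n = d_{n+1} ∘ h_n + h_{n−1} ∘ d_n for every n; (ii) each F_n factors through a finitely generated free R-module; and (iii) each id_{M_n} − ε_n is a bijective R-linear map. Then the identity chain map of M is chain homotopic to a chain map k : M → M each of whose components k_n : M_n → M_n factors through a finitely generated free R-module; explicitly, writing φ_n := (id_{M_n} − ε_n)⁻¹, one may take k := φ∘F − (d∘φ − φ∘d)∘h with chain homotopy given by the maps φ_{n+1} ∘ h_n. -/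
open CategoryTheory

section Stmt11Aux

variable {R : Type} [Ring R]

theorem ftff_neg {X Y : Type} [AddCommGroup X] [Module R X] [AddCommGroup Y] [Module R Y]
    {e : X →ₗ[R] Y} (he : FactorsThroughFinFree e) : FactorsThroughFinFree (-e) := by
  obtain ⟨k, α, β, rfl⟩ := he
  exact ⟨k, α, -β, by ext x; simp⟩

theorem ftff_add {X Y : Type} [AddCommGroup X] [Module R X] [AddCommGroup Y] [Module R Y]
    {e e' : X →ₗ[R] Y} (he : FactorsThroughFinFree e) (he' : FactorsThroughFinFree e') :
    FactorsThroughFinFree (e + e') := by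
  obtain ⟨k, α, β, rfl⟩ := he
  obtain ⟨k', α', β', rfl⟩ := he'
  let E : (Fin (k + k') → R) ≃ₗ[R] (Fin k → R) × (Fin k' → R) :=
    (LinearEquiv.funCongrLeft R R finSumFinEquiv).trans
      (LinearEquiv.sumArrowLequivProdArrow (Fin k) (Fin k') R R)
  refine ⟨k + k', E.symm.toLinearMap ∘ₗ α.prod α', (β.coprod β') ∘ₗ E.toLinearMap, ?_⟩
  ext x
  simp [LinearMap.coprod_apply]

theorem ftff_conj {A B C D : ModuleCat.{0} R} {e : B ⟶ C}
    (he : FactorsThroughFinFree e.hom) (a : A ⟶ B) (b : C ⟶ D) :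
    FactorsThroughFinFree (a ≫ e ≫ b).hom := by
  obtain ⟨k, α, β, hβα⟩ := he
  refine ⟨k, α ∘ₗ a.hom, b.hom ∘ₗ β, ?_⟩
  ext x
  show b.hom (e.hom (a.hom x)) = b.hom (β (α (a.hom x)))
  rw [hβα]; rfl

end Stmt11Aux

/-- Perturbation lemma: if, on a bounded chain complex `M`, the identity differs from an
invertible degree-zero map `id − ε` by a degreewise finite-rank map `F` up to the chain
homotopy `h` (i.e. `id − ε − F = d∘h + h∘d`), then the identity chain map of `M` is chain
homotopic to a chain map whose components factor through finitely generated free modules;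
explicitly, writing `φ := (id − ε)⁻¹`, one may take `k := φ∘F − (d∘φ − φ∘d)∘h`, with chain
homotopy given by the maps `φ_{n+1} ∘ h_n`. -/
theorem stmt11 (R : Type) [Ring R] (M : ChainComplex (ModuleCat.{0} R) ℤ)
    (hM : IsBoundedComplex M)
    (ε F : ∀ n : ℤ, M.X n ⟶ M.X n) (h : ∀ n : ℤ, M.X n ⟶ M.X (n + 1))
    (hhtpy : ∀ n : ℤ, 𝟙 (M.X n) - ε n - F n =
      h n ≫ M.d (n + 1) n +
        M.d n (n - 1) ≫ h (n - 1) ≫ eqToHom (congrArg M.X (by omega : n - 1 + 1 = n)))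
    (hF : ∀ n : ℤ, FactorsThroughFinFree ((F n).hom : M.X n →ₗ[R] M.X n))
    (hbij : ∀ n : ℤ, Function.Bijective ((𝟙 (M.X n) - ε n).hom : M.X n →ₗ[R] M.X n))
    (φ : ∀ n : ℤ, M.X n ⟶ M.X n)
    (hφ : ∀ n : ℤ, (𝟙 (M.X n) - ε n) ≫ φ n = 𝟙 (M.X n) ∧
      φ n ≫ (𝟙 (M.X n) - ε n) = 𝟙 (M.X n)) :
    ∃ k : M ⟶ M,
      (∀ n : ℤ, k.f n =
        F n ≫ φ n - h n ≫ (φ (n + 1) ≫ M.d (n + 1) n - M.d (n + 1) n ≫ φ n)) ∧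
      (∀ n : ℤ, FactorsThroughFinFree ((k.f n).hom : M.X n →ₗ[R] M.X n)) ∧
      ∃ H : Homotopy (𝟙 M) k, ∀ n : ℤ, H.hom n (n + 1) = h n ≫ φ (n + 1) := by
  classical
  have rel1 : ∀ n : ℤ, (ComplexShape.down ℤ).Rel (n + 1) n :=
    fun n => ComplexShape.down_mk _ _ rfl
  have rel0 : ∀ n : ℤ, (ComplexShape.down ℤ).Rel n (n - 1) :=
    fun n => ComplexShape.down_mk _ _ (by omega)
  have swapφ : ∀ (i j : ℤ) (hij : i = j),
      φ i ≫ eqToHom (congrArg M.X hij) = eqToHom (congrArg M.X hij) ≫ φ j := by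
    intro i j hij; subst hij; simp
  have castd : ∀ (i j : ℤ) (hij : i = j) (hij2 : i + 1 = j + 1),
      M.d (j + 1) i ≫ h i ≫ eqToHom (congrArg M.X hij2) = M.d (j + 1) j ≫ h j := by
    intro i j hij; subst hij; intro hij2; simp
  have hεφ : ∀ n : ℤ, ε n ≫ φ n = φ n - 𝟙 (M.X n) := by
    intro n
    have h1 : φ n - ε n ≫ φ n = 𝟙 (M.X n) := by
      simpa [Preadditive.sub_comp] using (hφ n).1
    rw [← h1]; abel
  set homR : ∀ i j, (ComplexShape.down ℤ).Rel j i → (M.X i ⟶ M.X j) :=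
    fun i j hij => (h i ≫ φ (i + 1)) ≫ eqToHom (congrArg M.X (show i + 1 = j from hij))
    with homR_def
  set N : M ⟶ M := Homotopy.nullHomotopicMap' homR with N_def
  have hNf : ∀ n : ℤ, N.f n
      = M.d n (n - 1) ≫
          ((h (n - 1) ≫ eqToHom (congrArg M.X (show n - 1 + 1 = n from rel0 n))) ≫ φ n)
        + (h n ≫ φ (n + 1)) ≫ M.d (n + 1) n := by
    intro n
    rw [N_def, Homotopy.nullHomotopicMap'_f (rel1 n) (rel0 n)]
    simp only [homR_def]
    rw [Category.assoc (h (n - 1)), swapφ _ _ (rel0 n)]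
    simp [eqToHom_refl]
  have hdh : ∀ n : ℤ,
      M.d n (n - 1) ≫ (h (n - 1) ≫ eqToHom (congrArg M.X (show n - 1 + 1 = n from rel0 n)))
        = 𝟙 (M.X n) - ε n - F n - h n ≫ M.d (n + 1) n := by
    intro n
    rw [hhtpy n]
    abel
  have hkey : ∀ n : ℤ, 𝟙 (M.X n) - N.f n
      = F n ≫ φ n - h n ≫ (φ (n + 1) ≫ M.d (n + 1) n - M.d (n + 1) n ≫ φ n) := by
    intro n
    rw [hNf n, ← Category.assoc (M.d n (n - 1)), hdh n]
    simp only [Preadditive.sub_comp, Preadditive.comp_sub, Category.id_comp, hεφ n,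
      Category.assoc]
    abel
  -- the two identities d∘(1-ε) and (1-ε)∘d
  have hA : ∀ n : ℤ, M.d (n + 1) n ≫ (𝟙 (M.X n) - ε n)
      = M.d (n + 1) n ≫ F n + M.d (n + 1) n ≫ (h n ≫ M.d (n + 1) n) := by
    intro n
    have e0 : 𝟙 (M.X n) - ε n = (𝟙 (M.X n) - ε n - F n) + F n := by abel
    rw [e0, Preadditive.comp_add, hhtpy n, Preadditive.comp_add]
    rw [← Category.assoc (M.d (n + 1) n) (M.d n (n - 1)), HomologicalComplex.d_comp_d,
      Limits.zero_comp]
    abel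
  have hB : ∀ n : ℤ, (𝟙 (M.X (n + 1)) - ε (n + 1)) ≫ M.d (n + 1) n
      = F (n + 1) ≫ M.d (n + 1) n + M.d (n + 1) n ≫ (h n ≫ M.d (n + 1) n) := by
    intro n
    have e0 : 𝟙 (M.X (n + 1)) - ε (n + 1) = (𝟙 (M.X (n + 1)) - ε (n + 1) - F (n + 1)) + F (n + 1) := by
      abel
    rw [e0, Preadditive.add_comp, hhtpy (n + 1), Preadditive.add_comp]
    rw [castd (n + 1 - 1) n (by omega) (by omega)]
    rw [Category.assoc (h (n + 1)), HomologicalComplex.d_comp_d, Limits.comp_zero,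
      Category.assoc]
    abel
  have key2 : ∀ n : ℤ, φ (n + 1) ≫ M.d (n + 1) n - M.d (n + 1) n ≫ φ n
      = φ (n + 1) ≫ ((M.d (n + 1) n ≫ F n - F (n + 1) ≫ M.d (n + 1) n) ≫ φ n) := by
    intro n
    have expand : M.d (n + 1) n ≫ F n - F (n + 1) ≫ M.d (n + 1) n
        = M.d (n + 1) n ≫ (𝟙 (M.X n) - ε n) - (𝟙 (M.X (n + 1)) - ε (n + 1)) ≫ M.d (n + 1) n := by
      rw [hA n, hB n]; abel
    rw [expand, Preadditive.sub_comp, Preadditive.comp_sub]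
    congr 1
    · rw [Category.assoc, (hφ n).1, Category.comp_id]
    · rw [Category.assoc, ← Category.assoc (φ (n + 1)), (hφ (n + 1)).2, Category.id_comp]
  refine ⟨𝟙 M - N, ?_, ?_, ?_⟩
  · intro n
    rw [HomologicalComplex.sub_f_apply, HomologicalComplex.id_f]
    exact hkey n
  · intro n
    have hfn : (𝟙 M - N).f n
        = (𝟙 (M.X n) ≫ F n ≫ φ n)
          + -((h n ≫ φ (n + 1) ≫ M.d (n + 1) n) ≫ F n ≫ φ n)
          + ((h n ≫ φ (n + 1)) ≫ F (n + 1) ≫ (M.d (n + 1) n ≫ φ n)) := by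
      rw [HomologicalComplex.sub_f_apply, HomologicalComplex.id_f, hkey n, key2 n]
      simp only [Preadditive.comp_sub, Preadditive.sub_comp, Category.assoc, Category.id_comp]
      abel
    rw [hfn]
    exact ftff_add (ftff_add (ftff_conj (hF n) (𝟙 _) (φ n))
      (ftff_neg (ftff_conj (hF n) (h n ≫ φ (n + 1) ≫ M.d (n + 1) n) (φ n))))
      (ftff_conj (hF (n + 1)) (h n ≫ φ (n + 1)) (M.d (n + 1) n ≫ φ n))
  · refine ⟨⟨fun i j => if hij : (ComplexShape.down ℤ).Rel j i then homR i j hij else 0,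
      fun i j hij => dif_neg hij, fun i => ?_⟩, fun n => ?_⟩
    · rw [dNext_eq _ (rel0 i), prevD_eq _ (rel1 i), dif_pos (rel0 i), dif_pos (rel1 i)]
      rw [HomologicalComplex.sub_f_apply, HomologicalComplex.id_f, N_def,
        Homotopy.nullHomotopicMap'_f (rel1 i) (rel0 i)]
      abel
    · show (if hij : (ComplexShape.down ℤ).Rel (n + 1) n then homR n (n + 1) hij else 0)
        = h n ≫ φ (n + 1)
      rw [dif_pos (rel1 n)]
      simp [homR_def]
end
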